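/- Let G(x) = 1/(1 + e^{-x}) be the standard logistic c.d.f. For 0 < r < 1, the density of the splogit distribution, f(x) = d/dx [G(x/r)^r], attains its maximum at the unique mode M = r · log(r), and consequently the Arnold–Groeneveld skewness γ_M = 1 - 2·G(M/r)^r equals 1 - 2·(r/(r+1))^r. -/

import Mathlib

open Real Set Filter Topology

/-- For the splogit family with `0 < r < 1`, the density `f = (G(·/r)^r)'` (with `G` the
standard logistic c.d.f.) attains its maximum at the unique mode `M = r log r`, and the
Arnold–Groeneveld skewness `1 - 2 G(M/r)^r` equals `1 - 2 (r/(r+1))^r`. -/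
theorem stmt_4 (r : ℝ) (hr : 0 < r) (hr1 : r < 1)
    (G : ℝ → ℝ) (hG : ∀ x, G x = 1 / (1 + Real.exp (-x)))
    (f : ℝ → ℝ) (hf : ∀ x, f x = deriv (fun y => G (y / r) ^ r) x)
    (M : ℝ) (hM : M = r * Real.log r) :
    (∀ x, x ≠ M → f x < f M) ∧
      1 - 2 * G (M / r) ^ r = 1 - 2 * (r / (r + 1)) ^ r := by
  have hrne : r ≠ 0 := hr.ne'
  have hr1p : (0:ℝ) < r + 1 := by linarith
  have hMr : M / r = Real.log r := by rw [hM]; field_simp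
  have hexpM : Real.exp (-(M / r)) = r⁻¹ := by
    rw [hMr, ← Real.log_inv, Real.exp_log (by positivity)]
  -- the function rewritten with rpow of a positive base
  have hfun : (fun y => G (y / r) ^ r) = fun y => (1 + Real.exp (-(y / r))) ^ (-r) := by
    funext y
    have hpos : (0:ℝ) < 1 + Real.exp (-(y / r)) := by positivity
    rw [hG, one_div, Real.inv_rpow hpos.le, ← Real.rpow_neg hpos.le]
  -- the density formula
  have hfeq : ∀ x, f x = Real.exp (-(x / r)) * (1 + Real.exp (-(x / r))) ^ (-(r + 1)) := by
    intro x
    have hpos : (0:ℝ) < 1 + Real.exp (-(x / r)) := by positivity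
    have h1 : HasDerivAt (fun y : ℝ => -(y / r)) (-(1 / r)) x :=
      ((hasDerivAt_id x).div_const r).neg
    have h2 : HasDerivAt (fun y : ℝ => 1 + Real.exp (-(y / r)))
        (Real.exp (-(x / r)) * -(1 / r)) x := (h1.exp).const_add 1
    have h3 := h2.rpow_const (p := -r) (Or.inl hpos.ne')
    rw [hf, hfun, h3.deriv]
    have hexp : (-r - 1 : ℝ) = -(r + 1) := by ring
    rw [hexp]
    field_simp
  -- key inequality from strict Bernoulli
  have key : ∀ s : ℝ, 0 < s → s ≠ 1 → s < ((r + s) / (r + 1)) ^ (r + 1) := by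
    intro s hs hs1
    have hx : (-1:ℝ) ≤ (s - 1) / (r + 1) := by
      rw [le_div_iff₀ hr1p]; nlinarith
    have hxne : (s - 1) / (r + 1) ≠ 0 := div_ne_zero (sub_ne_zero.mpr hs1) hr1p.ne'
    have hb := one_add_mul_self_lt_rpow_one_add hx hxne (show (1:ℝ) < r + 1 by linarith)
    have e1 : 1 + (r + 1) * ((s - 1) / (r + 1)) = s := by field_simp; ring
    have e2 : 1 + (s - 1) / (r + 1) = (r + s) / (r + 1) := by field_simp; ring
    rw [e1, e2] at hb
    exact hb
  constructor
  · intro x hxM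
    set t := Real.exp (-(x / r)) with ht_def
    have ht : 0 < t := Real.exp_pos _
    have hst : r * t ≠ 1 := by
      intro h
      apply hxM
      have ht' : t = r⁻¹ := by
        field_simp at h ⊢; linarith
      have : Real.exp (-(x / r)) = Real.exp (-(M / r)) := by rw [hexpM, ← ht']
      have := Real.exp_eq_exp.mp this
      have hxr : x / r = M / r := by linarith
      have : x / r * r = M / r * r := by rw [hxr]
      rwa [div_mul_cancel₀ _ hrne, div_mul_cancel₀ _ hrne] at this
    rw [hfeq, hfeq, hexpM]
    have h1t : (0:ℝ) < 1 + t := by positivity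
    have h1r : (1 : ℝ) + r⁻¹ = (r + 1) / r := by field_simp
    rw [h1r]
    have hA : (0:ℝ) < (r / (r + 1)) ^ (r + 1) := Real.rpow_pos_of_pos (by positivity) _
    have hB : (0:ℝ) < (1 + t) ^ (r + 1) := Real.rpow_pos_of_pos h1t _
    have hkey := key (r * t) (by positivity) hst
    have hsplit : ((r + r * t) / (r + 1)) ^ (r + 1)
        = (1 + t) ^ (r + 1) * (r / (r + 1)) ^ (r + 1) := by
      rw [← Real.mul_rpow h1t.le (by positivity)]
      congr 1
      field_simp
    rw [hsplit] at hkey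
    have hinv : ((r + 1) / r) ^ (-(r + 1) : ℝ) = ((r / (r + 1)) ^ (r + 1) : ℝ) := by
      rw [Real.rpow_neg (by positivity), ← Real.inv_rpow (by positivity)]
      congr 1
      rw [inv_div]
    rw [hinv, Real.rpow_neg h1t.le]
    -- goal: t * ((1+t)^(r+1))⁻¹ < r⁻¹ * (r/(r+1))^(r+1)
    rw [mul_comm t, ← div_eq_inv_mul, mul_comm r⁻¹, ← div_eq_mul_inv]
    rw [div_lt_div_iff₀ hB hr]
    nlinarith
  · have hGM : G (M / r) = r / (r + 1) := by
      rw [hG, hMr, ← Real.log_inv, Real.exp_log (by positivity)]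
      rw [one_div]
      rw [show (1 : ℝ) + r⁻¹ = (r + 1) / r by field_simp]
      rw [inv_div]
    rw [hGM]
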